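/- For λ ∈ (0,1), the function β_λ(ρ) = λ(1+λ)/(1-ρ²) + 2cos(2f₀(ρ))/(ρ²(1-ρ²)), where cos(2f₀(ρ)) = (1-6ρ²+ρ⁴)/(1+ρ²)², is positive for ρ near 0, negative for ρ near 1, and has exactly one zero in the interval (0,1). -/

import Mathlib

noncomputable def β (lam ρ : ℝ) : ℝ :=
  lam * (1 + lam) / (1 - ρ^2) + 2 * ((1 - 6*ρ^2 + ρ^4) / (1 + ρ^2)^2) / (ρ^2 * (1 - ρ^2))

/-- Numerator polynomial: `H c t = c*t*(1+t)^2 + 2*(1 - 6t + t^2)` expanded. -/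
noncomputable def Hc (c t : ℝ) : ℝ := c*t^3 + (2*c+2)*t^2 + (c-12)*t + 2

lemma beta_eq (lam ρ : ℝ) (h0 : 0 < ρ) (h1 : ρ < 1) :
    β lam ρ = Hc (lam*(1+lam)) (ρ^2) / (ρ^2*(1-ρ^2)*(1+ρ^2)^2) := by
  have hρ : ρ ≠ 0 := ne_of_gt h0
  have h2 : (1:ℝ) - ρ^2 ≠ 0 := by nlinarith
  have h3 : (1:ℝ) + ρ^2 ≠ 0 := by positivity
  unfold β Hc
  field_simp
  ring

lemma denom_pos (ρ : ℝ) (h0 : 0 < ρ) (h1 : ρ < 1) :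
    0 < ρ^2*(1-ρ^2)*(1+ρ^2)^2 := by
  have : 0 < 1 - ρ^2 := by nlinarith
  positivity

lemma Hc_hasDeriv (c t : ℝ) :
    HasDerivAt (Hc c) (c*(3*t^2) + ((2*c+2)*(2*t) + (c-12))) t := by
  have key : Hc c = fun t : ℝ => c*t^3 + ((2*c+2)*t^2 + ((c-12)*t + 2)) := by
    funext t; simp [Hc]; ring
  rw [key]
  have h1 : HasDerivAt (fun t : ℝ => c*t^3) (c*(3*t^2)) t := by
    simpa using (hasDerivAt_pow 3 t).const_mul c
  have h2 : HasDerivAt (fun t : ℝ => (2*c+2)*t^2) ((2*c+2)*(2*t)) t := by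
    simpa using (hasDerivAt_pow 2 t).const_mul (2*c+2)
  have h3 : HasDerivAt (fun t : ℝ => (c-12)*t + 2) (c-12) t := by
    simpa using ((hasDerivAt_id t).const_mul (c-12)).add_const 2
  exact h1.add (h2.add h3)

lemma Hc_deriv (c : ℝ) :
    deriv (Hc c) = fun t => c*(3*t^2) + ((2*c+2)*(2*t) + (c-12)) := by
  funext t; exact (Hc_hasDeriv c t).deriv

lemma Hc_deriv2 (c t : ℝ) : deriv^[2] (Hc c) t = c*(3*(2*t)) + (2*c+2)*2 := by
  have : deriv (deriv (Hc c)) t = c*(3*(2*t)) + (2*c+2)*2 := by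
    rw [Hc_deriv]
    have h1 : HasDerivAt (fun t : ℝ => c*(3*t^2)) (c*(3*(2*t))) t := by
      have := ((hasDerivAt_pow 2 t).const_mul 3).const_mul c
      simpa [mul_assoc] using this
    have h2 : HasDerivAt (fun t : ℝ => (2*c+2)*(2*t) + (c-12)) ((2*c+2)*2) t := by
      have : HasDerivAt (fun t : ℝ => (2*c+2)*(2*t)) ((2*c+2)*2) t := by
        simpa [mul_assoc] using ((hasDerivAt_id t).const_mul 2).const_mul (2*c+2)
      simpa using this.add_const (c-12)
    exact (h1.add h2).deriv
  simpa [Function.iterate_succ, Function.comp] using this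

lemma Hc_convex (c : ℝ) (hc : 0 < c) :
    StrictConvexOn ℝ (Set.Icc (0:ℝ) 1) (Hc c) := by
  apply strictConvexOn_of_deriv2_pos (convex_Icc 0 1)
  · have : Continuous (Hc c) := by unfold Hc; continuity
    exact this.continuousOn
  · intro x hx
    rw [interior_Icc] at hx
    rw [Hc_deriv2]
    nlinarith [hx.1, hc]

lemma Hc_continuous (c : ℝ) : Continuous (Hc c) := by unfold Hc; continuity

/-- At most one zero of `Hc c` in `(0,1)` when `0 < c < 2`. -/
lemma Hc_zero_unique (c : ℝ) (hc0 : 0 < c) (hc2 : c < 2) {t₁ t₂ : ℝ}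
    (h₁ : t₁ ∈ Set.Ioo (0:ℝ) 1) (h₂ : t₂ ∈ Set.Ioo (0:ℝ) 1)
    (hz1 : Hc c t₁ = 0) (hz2 : Hc c t₂ = 0) : t₁ = t₂ := by
  have H1 : Hc c 1 < 0 := by unfold Hc; nlinarith
  have key : ∀ s₁ s₂ : ℝ, s₁ ∈ Set.Ioo (0:ℝ) 1 → s₂ ∈ Set.Ioo (0:ℝ) 1 →
      Hc c s₁ = 0 → Hc c s₂ = 0 → s₁ < s₂ → False := by
    intro s₁ s₂ hs₁ hs₂ hz₁ hz₂ hlt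
    have hconv := Hc_convex c hc0
    have ha : (0:ℝ) < (1 - s₂)/(1 - s₁) := by
      apply div_pos <;> nlinarith [hs₁.2, hs₂.2]
    have hb : (0:ℝ) < (s₂ - s₁)/(1 - s₁) := by
      apply div_pos <;> nlinarith [hs₁.2]
    have hab : (1 - s₂)/(1 - s₁) + (s₂ - s₁)/(1 - s₁) = 1 := by
      have : (1:ℝ) - s₁ ≠ 0 := by nlinarith [hs₁.2]
      field_simp
      ring
    have hmem1 : s₁ ∈ Set.Icc (0:ℝ) 1 := ⟨le_of_lt hs₁.1, le_of_lt hs₁.2⟩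
    have hmem2 : (1:ℝ) ∈ Set.Icc (0:ℝ) 1 := ⟨by norm_num, le_refl _⟩
    have hne : s₁ ≠ 1 := ne_of_lt hs₁.2
    have := hconv.2 hmem1 hmem2 hne ha hb hab
    simp only [smul_eq_mul] at this
    have hne' : (1:ℝ) - s₁ ≠ 0 := by nlinarith [hs₁.2]
    have hcomb : (1 - s₂)/(1 - s₁) * s₁ + (s₂ - s₁)/(1 - s₁) * (1:ℝ) = s₂ := by
      field_simp; ring
    rw [hcomb, hz₁, hz₂, mul_zero, zero_add] at this
    have : (s₂ - s₁)/(1 - s₁) * Hc c 1 < 0 := mul_neg_of_pos_of_neg hb H1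
    linarith
  rcases lt_trichotomy t₁ t₂ with h | h | h
  · exact absurd h (fun h => key t₁ t₂ h₁ h₂ hz1 hz2 h)
  · exact h
  · exact absurd h (fun h => key t₂ t₁ h₂ h₁ hz2 hz1 h)

theorem beta_sign_structure (lam : ℝ) (hlam : lam ∈ Set.Ioo (0:ℝ) 1) :
    (∃ ε > 0, ∀ ρ ∈ Set.Ioo (0:ℝ) ε, 0 < β lam ρ) ∧
    (∃ ε > 0, ∀ ρ ∈ Set.Ioo (1 - ε) (1:ℝ), β lam ρ < 0) ∧
    (∃! ρ : ℝ, ρ ∈ Set.Ioo (0:ℝ) 1 ∧ β lam ρ = 0) := by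
  obtain ⟨hl0, hl1⟩ := hlam
  set c := lam * (1 + lam) with hc
  have hc0 : 0 < c := by nlinarith
  have hc2 : c < 2 := by nlinarith
  refine ⟨?_, ?_, ?_⟩
  · -- positive near 0
    refine ⟨1/3, by norm_num, ?_⟩
    intro ρ hρ
    have h0 : 0 < ρ := hρ.1
    have h1 : ρ < 1 := lt_trans hρ.2 (by norm_num)
    rw [beta_eq lam ρ h0 h1, ← hc]
    apply div_pos _ (denom_pos ρ h0 h1)
    have ht : ρ^2 < 1/9 := by nlinarith [hρ.2]
    unfold Hc
    have hp : 0 < ρ^2 := pow_pos h0 2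
    nlinarith [mul_pos hc0 (pow_pos hp 3), mul_pos (by linarith : (0:ℝ) < 2*c+2) (pow_pos hp 2), mul_pos hc0 hp]
  · -- negative near 1
    refine ⟨min (1/2) ((2-c)/8), lt_min (by norm_num) (by linarith), ?_⟩
    intro ρ hρ
    set ε := min (1/2) ((2-c)/8) with hε
    have hε2 : ε ≤ 1/2 := min_le_left _ _
    have hεc : ε ≤ (2-c)/8 := min_le_right _ _
    have hεpos : 0 < ε := lt_min (by norm_num) (by linarith)
    have h1 : ρ < 1 := hρ.2
    have h0 : 0 < ρ := by
      have := hρ.1; simp only [hε] at this ⊢; nlinarith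
    rw [beta_eq lam ρ h0 h1, ← hc]
    apply div_neg_of_neg_of_pos _ (denom_pos ρ h0 h1)
    have hρlb : 1 - ε < ρ := hρ.1
    have ht1 : 1/4 < ρ^2 := by nlinarith
    have ht2 : 1 - ρ^2 < 2*ε := by nlinarith
    unfold Hc
    have hp : 0 < ρ^2 := pow_pos h0 2
    have htlt : ρ^2 < 1 := by nlinarith
    nlinarith [mul_nonneg (mul_nonneg hc0.le hp.le) (mul_nonneg (by linarith : (0:ℝ) ≤ 1 - ρ^2) (by linarith : (0:ℝ) ≤ 3 + ρ^2)),
      mul_pos (by linarith : (0:ℝ) < 2 - c) (by linarith : (0:ℝ) < ρ^2 - 1/4),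
      mul_pos (by linarith : (0:ℝ) < 2*ε - (1 - ρ^2)) (by linarith : (0:ℝ) < 2*ε + (1 - ρ^2)),
      mul_nonneg hεpos.le (by linarith : (0:ℝ) ≤ (2-c)/8 - ε),
      mul_nonneg (by linarith : (0:ℝ) ≤ 2 - c) (by linarith : (0:ℝ) ≤ 1/2 - ε)]
  · -- unique zero
    have H0 : (0:ℝ) ∈ Set.Ioo (Hc c 1) (Hc c 0) := by
      constructor
      · unfold Hc; nlinarith
      · unfold Hc; norm_num
    have hIVT := intermediate_value_Ioo' (by norm_num : (0:ℝ) ≤ 1)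
      (Hc_continuous c).continuousOn H0
    obtain ⟨t, ht, hHt⟩ := hIVT
    refine ⟨Real.sqrt t, ⟨⟨Real.sqrt_pos.mpr ht.1, ?_⟩, ?_⟩, ?_⟩
    · have := Real.sqrt_lt_sqrt (le_of_lt ht.1) ht.2
      simpa using this
    · have hs0 : 0 < Real.sqrt t := Real.sqrt_pos.mpr ht.1
      have hs1 : Real.sqrt t < 1 := by
        have := Real.sqrt_lt_sqrt (le_of_lt ht.1) ht.2
        simpa using this
      rw [beta_eq lam _ hs0 hs1, ← hc]
      rw [Real.sq_sqrt (le_of_lt ht.1), hHt]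
      simp
    · rintro ρ ⟨⟨hρ0, hρ1⟩, hβ⟩
      rw [beta_eq lam ρ hρ0 hρ1, ← hc] at hβ
      have hd := denom_pos ρ hρ0 hρ1
      have hzρ : Hc c (ρ^2) = 0 := by
        rcases div_eq_zero_iff.mp hβ with h | h
        · exact h
        · exact absurd h (ne_of_gt hd)
      have htρ : ρ^2 ∈ Set.Ioo (0:ℝ) 1 := ⟨pow_pos hρ0 2, by nlinarith⟩
      have := Hc_zero_unique c hc0 hc2 htρ ht hzρ hHt
      have : ρ^2 = (Real.sqrt t)^2 := by
        rw [Real.sq_sqrt (le_of_lt ht.1)]; exact this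
      nlinarith [Real.sqrt_pos.mpr ht.1]
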